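/- Let c(u) = u/(e^u − 1) (with c(0) = 1) and for fixed b ∈ ℝ define g(u,b) = c(u)·sinh²((u−b)/2). Then g(·,b) attains a global minimum value 0 uniquely at u = b, and its derivative in u is negative for u < b and positive for u > b. -/

import Mathlib

/-- The function `c(u) = u/(e^u - 1)` extended by `c(0) = 1`. -/
noncomputable def c (u : ℝ) : ℝ := if u = 0 then 1 else u / (Real.exp u - 1)

/-- `g(u,b) = c(u) sinh²((u-b)/2)`. -/
noncomputable def g (u b : ℝ) : ℝ := c u * Real.sinh ((u - b) / 2) ^ 2

open Real

lemma exp_sub_one_pos {u : ℝ} (h : 0 < u) : 0 < Real.exp u - 1 := by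
  nlinarith [Real.add_one_le_exp u]

lemma exp_sub_one_neg {u : ℝ} (h : u < 0) : Real.exp u - 1 < 0 := by
  have := Real.exp_lt_exp.mpr h
  simpa [Real.exp_zero] using this

lemma c_pos (u : ℝ) : 0 < c u := by
  unfold c
  rcases eq_or_ne u 0 with h | h
  · simp [h]
  · rw [if_neg h]
    rcases lt_or_gt_of_ne h with h' | h'
    · exact div_pos_iff.mpr (Or.inr ⟨h', exp_sub_one_neg h'⟩)
    · exact div_pos (by linarith) (exp_sub_one_pos h')

/-- The derivative of `c`. -/
noncomputable def c' (u : ℝ) : ℝ :=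
  if u = 0 then -(1/2) else (Real.exp u - 1 - u * Real.exp u) / (Real.exp u - 1) ^ 2

lemma denom_lb {u : ℝ} (h1 : |u| ≤ 1) : |u| ≤ 2 * |Real.exp u - 1| := by
  rcases le_or_gt 0 u with h | h
  · have h2 : 0 ≤ Real.exp u - 1 := by nlinarith [Real.add_one_le_exp u]
    rw [abs_of_nonneg h, abs_of_nonneg h2]
    nlinarith [Real.add_one_le_exp u]
  · have h2 : Real.exp u - 1 < 0 := exp_sub_one_neg h
    rw [abs_of_neg h, abs_of_neg h2]
    have hu1 : -1 ≤ u := by rw [abs_of_neg h] at h1; linarith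
    have key : (1 - u) * Real.exp u ≤ 1 := by
      have := Real.add_one_le_exp (-u)
      have hp := Real.exp_pos u
      have hm : Real.exp (-u) * Real.exp u = 1 := by
        rw [← Real.exp_add]; simp
      nlinarith
    nlinarith [Real.exp_pos u]

lemma exp_taylor3 {u : ℝ} (h1 : |u| ≤ 1) :
    |Real.exp u - (1 + u + u ^ 2 / 2)| ≤ (2/9) * |u| ^ 3 := by
  have := Real.exp_bound h1 (by norm_num : 0 < 3)
  have hs : (∑ i ∈ Finset.range 3, u ^ i / (Nat.factorial i)) = 1 + u + u ^ 2 / 2 := by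
    simp [Finset.sum_range_succ, Nat.factorial]
  rw [hs] at this
  calc |Real.exp u - (1 + u + u ^ 2 / 2)| ≤ |u| ^ 3 * ((3:ℕ).succ / ((Nat.factorial 3) * 3)) := this
    _ = (2/9) * |u| ^ 3 := by norm_num [Nat.factorial]; ring

lemma c_est {u : ℝ} (h1 : |u| ≤ 1) (h0 : u ≠ 0) : |c u - 1 + u / 2| ≤ 3 * u ^ 2 := by
  have hD : Real.exp u - 1 ≠ 0 := by
    rcases lt_or_gt_of_ne h0 with h | h
    · exact ne_of_lt (exp_sub_one_neg h)
    · exact ne_of_gt (exp_sub_one_pos h)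
  have hc : c u = u / (Real.exp u - 1) := by rw [c, if_neg h0]
  have hrw : c u - 1 + u / 2 =
      (Real.exp u * (u - 2) + u + 2) / (2 * (Real.exp u - 1)) := by
    rw [hc]; field_simp; ring
  rw [hrw, abs_div]
  set R := Real.exp u - (1 + u + u ^ 2 / 2) with hR
  have hRb : |R| ≤ (2/9) * |u| ^ 3 := exp_taylor3 h1
  have hnum : Real.exp u * (u - 2) + u + 2 = u ^ 3 / 2 + R * (u - 2) := by
    rw [hR]; ring
  have habs_u2 : |u - 2| ≤ 3 := by
    rw [abs_le] at h1 ⊢; constructor <;> linarith [h1.1, h1.2]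
  have hnum_b : |Real.exp u * (u - 2) + u + 2| ≤ (7/6) * |u| ^ 3 := by
    rw [hnum]
    calc |u ^ 3 / 2 + R * (u - 2)| ≤ |u ^ 3 / 2| + |R * (u - 2)| := abs_add_le _ _
      _ = |u| ^ 3 / 2 + |R| * |u - 2| := by rw [abs_mul, abs_div, abs_pow]; norm_num
      _ ≤ |u| ^ 3 / 2 + ((2/9) * |u| ^ 3) * 3 := by
          gcongr
      _ = (7/6) * |u| ^ 3 := by ring
  have hden : |u| / 2 ≤ |2 * (Real.exp u - 1)| := by
    rw [abs_mul]
    have := denom_lb h1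
    rw [abs_two]; linarith [abs_nonneg u]
  have hden_pos : 0 < |2 * (Real.exp u - 1)| := by
    positivity
  have hu_pos : 0 < |u| := abs_pos.mpr h0
  rw [div_le_iff₀ hden_pos]
  calc |Real.exp u * (u - 2) + u + 2| ≤ (7/6) * |u| ^ 3 := hnum_b
    _ = ((7/3) * |u| ^ 2) * (|u| / 2) := by ring
    _ ≤ (3 * u ^ 2) * (|u| / 2) := by
        have : |u| ^ 2 = u ^ 2 := sq_abs u
        nlinarith [abs_nonneg u]
    _ ≤ (3 * u ^ 2) * |2 * (Real.exp u - 1)| := by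
        have h2 : (0:ℝ) ≤ 3 * u ^ 2 := by positivity
        exact mul_le_mul_of_nonneg_left hden h2

lemma hasDerivAt_c_zero : HasDerivAt c (c' 0) 0 := by
  have hc0 : c 0 = 1 := by simp [c]
  have hc'0 : c' 0 = -(1/2) := by simp [c']
  rw [hasDerivAt_iff_isLittleO, Asymptotics.isLittleO_iff]
  intro ε hε
  rw [Metric.eventually_nhds_iff]
  refine ⟨min 1 (ε / 3), by positivity, fun {u} hu => ?_⟩
  rcases eq_or_ne u 0 with rfl | h0
  · simp
  · have hd : |u| < min 1 (ε / 3) := by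
      simpa [Real.dist_eq] using hu
    have h1 : |u| ≤ 1 := le_of_lt (lt_of_lt_of_le hd (min_le_left _ _))
    have h2 : |u| < ε / 3 := lt_of_lt_of_le hd (min_le_right _ _)
    have key := c_est h1 h0
    have hgoal : c u - c 0 - (u - 0) • c' 0 = c u - 1 + u / 2 := by
      rw [hc0, hc'0]; simp [smul_eq_mul]; ring
    rw [hgoal]
    have : ‖u - 0‖ = |u| := by simp [Real.norm_eq_abs]
    rw [Real.norm_eq_abs, this]
    calc |c u - 1 + u / 2| ≤ 3 * u ^ 2 := key
      _ = (3 * |u|) * |u| := by rw [← sq_abs]; ring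
      _ ≤ ε * |u| := by
          have : 0 ≤ |u| := abs_nonneg u
          nlinarith

lemma hasDerivAt_c (u : ℝ) : HasDerivAt c (c' u) u := by
  rcases eq_or_ne u 0 with rfl | h0
  · exact hasDerivAt_c_zero
  · have hD : Real.exp u - 1 ≠ 0 := by
      rcases lt_or_gt_of_ne h0 with h | h
      · exact ne_of_lt (exp_sub_one_neg h)
      · exact ne_of_gt (exp_sub_one_pos h)
    have h1 : HasDerivAt (fun v => v / (Real.exp v - 1))
        ((1 * (Real.exp u - 1) - u * Real.exp u) / (Real.exp u - 1) ^ 2) u := by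
      exact (hasDerivAt_id u).div ((Real.hasDerivAt_exp u).sub_const 1) hD
    have heq : c =ᶠ[nhds u] (fun v => v / (Real.exp v - 1)) := by
      filter_upwards [eventually_ne_nhds h0] with v hv
      rw [c, if_neg hv]
    have := h1.congr_of_eventuallyEq heq
    refine this.congr_deriv ?_
    rw [c', if_neg h0]; ring_nf

lemma cc'_add (u : ℝ) : 0 ≤ c' u + c u := by
  rcases eq_or_ne u 0 with rfl | h0
  · simp [c, c']; norm_num
  · have hD : Real.exp u - 1 ≠ 0 := by
      rcases lt_or_gt_of_ne h0 with h | h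
      · exact ne_of_lt (exp_sub_one_neg h)
      · exact ne_of_gt (exp_sub_one_pos h)
    have : c' u + c u = (Real.exp u - 1 - u) / (Real.exp u - 1) ^ 2 := by
      rw [c, c', if_neg h0, if_neg h0]; field_simp; ring
    rw [this]
    apply div_nonneg
    · nlinarith [Real.add_one_le_exp u]
    · positivity

lemma cc'_sub (u : ℝ) : 0 ≤ c u - c' u := by
  rcases eq_or_ne u 0 with rfl | h0
  · simp [c, c']; norm_num
  · have hD : Real.exp u - 1 ≠ 0 := by
      rcases lt_or_gt_of_ne h0 with h | h
      · exact ne_of_lt (exp_sub_one_neg h)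
      · exact ne_of_gt (exp_sub_one_pos h)
    have hrw : c u - c' u = (2 * u * Real.exp u - Real.exp u - u + 1) / (Real.exp u - 1) ^ 2 := by
      rw [c, c', if_neg h0, if_neg h0]; field_simp; ring
    rw [hrw]
    apply div_nonneg
    · -- (1-2u)e^u ≤ (1-u)e^u - u e^u ≤ 1 - u e^u ≤ 1 - u
      have key : (1 - u) * Real.exp u ≤ 1 := by
        have := Real.add_one_le_exp (-u)
        have hp := Real.exp_pos u
        have hm : Real.exp (-u) * Real.exp u = 1 := by
          rw [← Real.exp_add]; simp
        nlinarith
      have sgn : 0 ≤ u * (Real.exp u - 1) := by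
        rcases le_or_gt 0 u with h | h
        · have : 0 ≤ Real.exp u - 1 := by nlinarith [Real.add_one_le_exp u]
          positivity
        · nlinarith [exp_sub_one_neg h]
      nlinarith
    · positivity

lemma hasDerivAt_g (b u : ℝ) : HasDerivAt (fun v => g v b)
    (Real.sinh ((u - b) / 2) *
      (c' u * Real.sinh ((u - b) / 2) + c u * Real.cosh ((u - b) / 2))) u := by
  have hlin : HasDerivAt (fun v : ℝ => (v - b) / 2) (1 / 2) u :=
    ((hasDerivAt_id u).sub_const b).div_const 2
  have hs : HasDerivAt (fun v => Real.sinh ((v - b) / 2))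
      (Real.cosh ((u - b) / 2) * (1 / 2)) u :=
    hlin.sinh
  have hs2 := hs.pow 2
  have := (hasDerivAt_c u).mul hs2
  refine HasDerivAt.congr_deriv (f := fun v => g v b) this ?_
  simp only [Pi.pow_apply]; ring

lemma deriv_g_eq (b u : ℝ) : deriv (fun v => g v b) u =
    Real.sinh ((u - b) / 2) *
      (c' u * Real.sinh ((u - b) / 2) + c u * Real.cosh ((u - b) / 2)) :=
  (hasDerivAt_g b u).deriv

lemma bracket_pos (b u : ℝ) (h : u ≠ b) :
    0 < c' u * Real.sinh ((u - b) / 2) + c u * Real.cosh ((u - b) / 2) := by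
  set t := (u - b) / 2 with ht
  have hA := cc'_add u
  have hB := cc'_sub u
  have hc := c_pos u
  have h1 : Real.cosh t - Real.sinh t = Real.exp (-t) := Real.cosh_sub_sinh t
  have h2 : Real.cosh t + Real.sinh t = Real.exp t := Real.cosh_add_sinh t
  have he1 : 0 < Real.exp (-t) := Real.exp_pos _
  have he2 : 0 < Real.exp t := Real.exp_pos _
  rcases lt_or_gt_of_ne (sub_ne_zero.mpr h) with hlt | hgt
  · -- u - b < 0, t < 0, sinh t < 0
    have hts : Real.sinh t < 0 := Real.sinh_neg_iff.mpr (by rw [ht]; linarith)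
    nlinarith [mul_nonneg hB (neg_nonneg.mpr (le_of_lt hts))]
  · have hts : 0 < Real.sinh t := Real.sinh_pos_iff.mpr (by rw [ht]; linarith)
    nlinarith [mul_nonneg hA (le_of_lt hts)]

theorem stmt9 (b : ℝ) :
    g b b = 0 ∧
    (∀ u, u ≠ b → 0 < g u b) ∧
    (∀ u, u < b → deriv (fun v => g v b) u < 0) ∧
    (∀ u, b < u → 0 < deriv (fun v => g v b) u) := by
  refine ⟨by simp [g], ?_, ?_, ?_⟩
  · intro u hu
    have hs : Real.sinh ((u - b) / 2) ≠ 0 := by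
      rw [Ne, Real.sinh_eq_zero]
      intro h
      apply hu
      have : u - b = 0 := by linarith [h]
      linarith
    have : 0 < Real.sinh ((u - b) / 2) ^ 2 :=
      lt_of_le_of_ne (sq_nonneg _) (Ne.symm (pow_ne_zero 2 hs))
    exact mul_pos (c_pos u) this
  · intro u hu
    rw [deriv_g_eq]
    have hb := bracket_pos b u (ne_of_lt hu)
    have hts : Real.sinh ((u - b) / 2) < 0 := Real.sinh_neg_iff.mpr (by linarith)
    exact mul_neg_of_neg_of_pos hts hb
  · intro u hu
    rw [deriv_g_eq]
    have hb := bracket_pos b u (ne_of_gt hu)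
    have hts : 0 < Real.sinh ((u - b) / 2) := Real.sinh_pos_iff.mpr (by linarith)
    exact mul_pos hts hb
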